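/- Every k-degenerate finite simple graph G has arboricity at most k; that is, the edge set of G can be partitioned into at most k spanning forests. -/

import Mathlib

/-- `G` is `k`-degenerate. -/
def Degenerate {V : Type*} (G : SimpleGraph V) (k : ℕ) : Prop :=
  ∃ ord : V → ℕ, Function.Injective ord ∧
    ∀ v : V, Nat.card {u : V // G.Adj v u ∧ ord v < ord u} ≤ k

/-- The arboricity of `G`: the minimum number of spanning forests of `G`
whose union covers all edges of `G`. -/
noncomputable def arboricity {V : Type*} (G : SimpleGraph V) : ℕ :=
  sInf {m : ℕ | ∃ H : Fin m → SimpleGraph V,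
    (∀ i, H i ≤ G ∧ (H i).IsAcyclic) ∧ ∀ u v, G.Adj u v → ∃ i, (H i).Adj u v}

open SimpleGraph in
/-- A graph in which every vertex has at most one neighbour that is later in an
injective ordering is acyclic. -/
lemma isAcyclic_of_unique_up {V : Type*} (H : SimpleGraph V) (ord : V → ℕ)
    (hinj : Function.Injective ord)
    (huniq : ∀ a b c, H.Adj a b → H.Adj a c → ord a < ord b → ord a < ord c → b = c) :
    H.IsAcyclic := by
  classical
  intro v c0 hc0
  -- pick a vertex of minimal `ord` on the cycle
  have hsupp : v ∈ c0.support := c0.start_mem_support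
  have hne : c0.support.toFinset.Nonempty := ⟨v, List.mem_toFinset.2 hsupp⟩
  obtain ⟨u, hu, hmin⟩ := Finset.exists_min_image c0.support.toFinset ord hne
  have humem : u ∈ c0.support := List.mem_toFinset.1 hu
  have hmin' : ∀ x ∈ c0.support, ord u ≤ ord x := fun x hx =>
    hmin x (List.mem_toFinset.2 hx)
  -- rotate the cycle to start at `u`
  set c := c0.rotate u humem with hcdef
  have hc : c.IsCycle := hc0.rotate humem
  have hsub : ∀ x ∈ c.support, x ∈ c0.support := by
    intro x hx
    rw [c.support_eq_cons] at hx
    rcases List.mem_cons.1 hx with h | h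
    · exact h ▸ humem
    · exact List.mem_of_mem_tail ((SimpleGraph.Walk.support_rotate c0 u humem).mem_iff.1 h)
  have hminc : ∀ x ∈ c.support, ord u ≤ ord x := fun x hx => hmin' x (hsub x hx)
  clear_value c
  -- destructure the cycle
  cases c with
  | nil => exact hc.not_nil SimpleGraph.Walk.nil_nil
  | cons hadj p =>
    rename_i b
    -- `p : H.Walk b u`, `hadj : H.Adj u b`
    have hpnotnil : ¬ p.reverse.Nil := by
      intro hnil
      exact hadj.ne hnil.eq
    obtain ⟨b2, hadj2, q, hq⟩ := SimpleGraph.Walk.not_nil_iff.1 hpnotnil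
    -- `hadj2 : H.Adj u b2`
    have hb_mem : b ∈ (SimpleGraph.Walk.cons hadj p).support := by
      simp [SimpleGraph.Walk.support_cons]
    have hb2_mem : b2 ∈ (SimpleGraph.Walk.cons hadj p).support := by
      have : b2 ∈ p.reverse.support := by
        rw [hq]; simp [SimpleGraph.Walk.support_cons]
      rw [SimpleGraph.Walk.support_reverse, List.mem_reverse] at this
      simp [SimpleGraph.Walk.support_cons, this]
    have hub : ord u < ord b := by
      have h1 := hminc b hb_mem
      exact lt_of_le_of_ne h1 (fun h => hadj.ne (hinj h))
    have hub2 : ord u < ord b2 := by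
      have h1 := hminc b2 hb2_mem
      exact lt_of_le_of_ne h1 (fun h => hadj2.ne (hinj h))
    have heq : b = b2 := huniq u b b2 hadj hadj2 hub hub2
    -- but then edge s(u,b) appears twice in the cycle
    have hedge : s(u, b2) ∈ p.edges := by
      have : s(u, b2) ∈ p.reverse.edges := by
        rw [hq]; simp [SimpleGraph.Walk.edges_cons]
      rwa [SimpleGraph.Walk.edges_reverse, List.mem_reverse] at this
    have hnodup := hc.edges_nodup
    rw [SimpleGraph.Walk.edges_cons] at hnodup
    exact (List.nodup_cons.1 hnodup).1 (heq ▸ hedge)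

/-- Every `k`-degenerate finite simple graph has arboricity at most `k`. -/
theorem stmt3 {V : Type*} [Fintype V] (k : ℕ) (G : SimpleGraph V)
    (hG : Degenerate G k) : arboricity G ≤ k := by
  classical
  obtain ⟨ord, hinj, hcard⟩ := hG
  -- choose, for each vertex, an injection from its up-neighbours into `Fin k`
  have hemb : ∀ v : V, Nonempty ({u : V // G.Adj v u ∧ ord v < ord u} ↪ Fin k) := by
    intro v
    apply Function.Embedding.nonempty_of_card_le
    rw [Fintype.card_fin, ← Nat.card_eq_fintype_card]
    exact hcard v
  have emb : ∀ v : V, {u : V // G.Adj v u ∧ ord v < ord u} ↪ Fin k := fun v => (hemb v).some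
  set r : Fin k → V → V → Prop :=
    fun i a b => ∃ h : G.Adj a b ∧ ord a < ord b, emb a ⟨b, h⟩ = i with hr
  set H : Fin k → SimpleGraph V := fun i => SimpleGraph.fromRel (r i) with hH
  have hadj : ∀ i a b, (H i).Adj a b ↔ a ≠ b ∧ (r i a b ∨ r i b a) := by
    intro i a b
    simp [hH, SimpleGraph.fromRel_adj]
  -- key uniqueness: each vertex has at most one up-neighbour in each `H i`
  have hkey : ∀ i a b, (H i).Adj a b → ord a < ord b →
      ∃ hw : G.Adj a b ∧ ord a < ord b, emb a ⟨b, hw⟩ = i := by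
    intro i a b h hab
    rcases (hadj i a b).1 h with ⟨hne, hr1 | hr2⟩
    · exact hr1
    · obtain ⟨hw, _⟩ := hr2
      exact absurd hab (not_lt.2 hw.2.le)
  have huniq : ∀ i a b c, (H i).Adj a b → (H i).Adj a c →
      ord a < ord b → ord a < ord c → b = c := by
    intro i a b c h1 h2 hb hcc
    obtain ⟨w1, e1⟩ := hkey i a b h1 hb
    obtain ⟨w2, e2⟩ := hkey i a c h2 hcc
    have := (emb a).injective (e1.trans e2.symm)
    exact congrArg Subtype.val this
  have hmem : k ∈ {m : ℕ | ∃ H : Fin m → SimpleGraph V,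
      (∀ i, H i ≤ G ∧ (H i).IsAcyclic) ∧ ∀ u v, G.Adj u v → ∃ i, (H i).Adj u v} := by
    refine ⟨H, fun i => ⟨?_, ?_⟩, ?_⟩
    · intro a b h
      rcases (hadj i a b).1 h with ⟨hne, h1 | h2⟩
      · exact h1.1.1
      · exact h2.1.1.symm
    · exact isAcyclic_of_unique_up (H i) ord hinj (huniq i)
    · intro a b h
      rcases lt_or_gt_of_ne (fun he : ord a = ord b => h.ne (hinj he)) with hlt | hgt
      · exact ⟨emb a ⟨b, h, hlt⟩, (hadj _ a b).2 ⟨h.ne, Or.inl ⟨⟨h, hlt⟩, rfl⟩⟩⟩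
      · exact ⟨emb b ⟨a, h.symm, hgt⟩, (hadj _ a b).2 ⟨h.ne, Or.inr ⟨⟨h.symm, hgt⟩, rfl⟩⟩⟩
  exact Nat.sInf_le hmem
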